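/- With the notation below: (1) if b_0 ≡ b_1 ≡ b_2 ≡ b_3 ≡ 0 (mod 2), then D_4(b)·D_4(c) is 2^8 times an odd integer when b_0+b_1+b_2+b_3 ≡ c_0+c_1+c_2+c_3 ≡ 2 (mod 4), and is divisible by 2^12 otherwise; (2) if b_0 ≡ b_1 ≡ b_2 ≡ b_3 ≡ 1 (mod 2), then D_4(b)·D_4(c) is 2^8 times an odd integer when b_0+b_1+b_2+b_3 ≡ c_0+c_1+c_2+c_3 ≡ 2 (mod 4), and is divisible by 2^11 otherwise; (3) if b_0 ≡ b_2 ≢ b_1 ≡ b_3 (mod 2), then D_4(b)·D_4(c) is 2^10 times an odd integer when b_0−b_2 ≡ b_1−b_3 ≡ c_0−c_2 ≡ c_1−c_3 ≡ 2 (mod 4), and is divisible by 2^11 otherwise; (4) if b_0+b_2 ≡ b_1+b_3 ≡ 1 (mod 2), then D_4(b)·D_4(c) is 2^8 times an odd integer when (b_0+b_2)(b_1+b_3) ≡ ±3 (mod 8) and (c_0+c_2)(c_1+c_3) ≡ ±3 (mod 8), and is divisible by 2^9 otherwise. -/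

import Mathlib

open Matrix Complex

def D4 (x0 x1 x2 x3 : ℤ) : ℤ :=
  (Matrix.of ![![x0, x1, x2, x3], ![x3, x0, x1, x2], ![x2, x3, x0, x1], ![x1, x2, x3, x0]]).det

def bI (a : ℕ → ℤ) (i : ℕ) : ℤ := (a i + a (i + 8)) + (a (i + 4) + a (i + 12))

def cI (a : ℕ → ℤ) (i : ℕ) : ℤ := (a i + a (i + 8)) - (a (i + 4) + a (i + 12))

lemma D4_eq2 (x0 x1 x2 x3 : ℤ) : D4 x0 x1 x2 x3 =
    ((x0+x2)^2 - (x1+x3)^2) * ((x0-x2)^2+(x1-x3)^2) := by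
  show (Matrix.det _) = _
  rw [Matrix.det_succ_row_zero]
  simp [Fin.sum_univ_succ, Matrix.det_fin_three, Fin.succAbove,
    Fin.castSucc, Fin.castAdd, Fin.castLE]
  ring

lemma key8 : ∀ m n : ZMod 8, 4*m-4 = 0 → 4*n-4 = 0 → m^2-n^2 = 0 := by decide

lemma keypm3 : ∀ m n : ZMod 16, 8*m-8=0 → 8*n-8=0 →
    (6-2*(m*n)=0 ∨ -6-2*(m*n)=0) → m^2-n^2-8 = 0 := by decide

lemma keypm1 : ∀ m n : ZMod 16, 8*m-8=0 → 8*n-8=0 →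
    ¬(6-2*(m*n)=0) → ¬(-6-2*(m*n)=0) → m^2-n^2 = 0 := by decide

lemma key2b : ∀ M N X Y : ZMod 2, M+N-1=0 → X+Y-1=0 →
    (M^2-N^2)*(X^2+Y^2)-1 = 0 := by decide

lemma key2 : ∀ m n : ZMod 2, m+n-1 = 0 → m^2-n^2-1 = 0 := by decide

lemma dvd_of_zmod (n : ℕ) [NeZero n] (z : ℤ) (h : ((z : ZMod n) = 0)) : (n:ℤ) ∣ z :=
  (ZMod.intCast_zmod_eq_zero_iff_dvd z n).mp h

lemma zmod_of_dvd (n : ℕ) [NeZero n] (z : ℤ) (h : (n:ℤ) ∣ z) : ((z : ZMod n) = 0) :=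
  (ZMod.intCast_zmod_eq_zero_iff_dvd z n).mpr h

lemma odd_of {z : ℤ} (h : (2:ℤ) ∣ z - 1) : Odd z := Int.odd_iff.mpr (by omega)

lemma L8odd (m n : ℤ) (hm : (2:ℤ) ∣ m-1) (hn : (2:ℤ) ∣ n-1) : ∃ j, m^2-n^2 = 8*j := by
  have zm := zmod_of_dvd 8 _ (show (8:ℤ) ∣ 4*(m-1) by omega)
  have zn := zmod_of_dvd 8 _ (show (8:ℤ) ∣ 4*(n-1) by omega)
  push_cast at zm zn
  have := key8 m n (by linear_combination zm) (by linear_combination zn)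
  obtain ⟨j, hj⟩ := dvd_of_zmod 8 (m^2-n^2) (by push_cast; linear_combination this)
  exact ⟨j, by push_cast at hj; linarith⟩

lemma LU2 (x y : ℤ) (hx : (2:ℤ) ∣ x-1) (hy : (2:ℤ) ∣ y-1) :
    ∃ w, Odd w ∧ x^2+y^2 = 2*w := by
  obtain ⟨k, hk⟩ := hx
  obtain ⟨l, hl⟩ := hy
  refine ⟨2*(k*k+k+l*l+l)+1, odd_of ⟨k*k+k+l*l+l, by ring⟩, ?_⟩
  linear_combination (x+1+2*k)*hk + (y+1+2*l)*hl

lemma L4dvd (m n : ℤ) (h : (2:ℤ) ∣ m+n) : ∃ j, m^2-n^2 = 4*j := by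
  obtain ⟨s, hs⟩ := h
  exact ⟨s*(s-n), by linear_combination (m - n + 2*s) * hs⟩

lemma L16 (M N X Y : ℤ) (h1 : (2:ℤ) ∣ M+N) (h2 : (2:ℤ) ∣ M-X) (h3 : (2:ℤ) ∣ N-Y) :
    ∃ e, (M^2-N^2)*(X^2+Y^2) = 16*e := by
  by_cases hM : (2:ℤ) ∣ M
  · obtain ⟨m', hm'⟩ := hM
    obtain ⟨n', hn'⟩ : (2:ℤ) ∣ N := by omega
    obtain ⟨x', hx'⟩ : (2:ℤ) ∣ X := by omega
    obtain ⟨y', hy'⟩ : (2:ℤ) ∣ Y := by omega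
    exact ⟨(m'^2-n'^2)*(x'^2+y'^2), by rw [hm',hn',hx',hy']; ring⟩
  · obtain ⟨j, hj⟩ := L8odd M N (by omega) (by omega)
    obtain ⟨w, _, hw⟩ := LU2 X Y (by omega) (by omega)
    exact ⟨j*w, by rw [hj, hw]; ring⟩

lemma L8 (M N X Y : ℤ) (h1 : (2:ℤ) ∣ M+N) (h2 : (2:ℤ) ∣ M+X-1) (h3 : (2:ℤ) ∣ N+Y-1) :
    ∃ e, (M^2-N^2)*(X^2+Y^2) = 8*e := by
  by_cases hM : (2:ℤ) ∣ M
  · obtain ⟨j, hj⟩ := L4dvd M N h1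
    obtain ⟨w, _, hw⟩ := LU2 X Y (by omega) (by omega)
    exact ⟨j*w, by rw [hj, hw]; ring⟩
  · obtain ⟨j, hj⟩ := L8odd M N (by omega) (by omega)
    obtain ⟨x',hx'⟩ : (2:ℤ) ∣ X := by omega
    obtain ⟨y',hy'⟩ : (2:ℤ) ∣ Y := by omega
    exact ⟨4*j*(x'^2+y'^2), by rw [hj, hx', hy']; ring⟩

lemma L4 (M N X Y : ℤ) (h1 : (2:ℤ) ∣ M+N+X+Y-1) (h2 : (2:ℤ) ∣ X ∨ (2:ℤ) ∣ Y) :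
    ∃ e, (M^2-N^2)*(X^2+Y^2) = 4*e := by
  by_cases hXY : (2:ℤ) ∣ X+Y
  · obtain ⟨x',hx'⟩ : (2:ℤ) ∣ X := by rcases h2 with h|h <;> omega
    obtain ⟨y',hy'⟩ : (2:ℤ) ∣ Y := by omega
    exact ⟨(M^2-N^2)*(x'^2+y'^2), by rw [hx',hy']; ring⟩
  · obtain ⟨j, hj⟩ := L4dvd M N (by omega)
    exact ⟨j*(X^2+Y^2), by rw [hj]; ring⟩

lemma L2 (M N X Y : ℤ) (h1 : (2:ℤ) ∣ M+N+X+Y-1) :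
    ∃ e, (M^2-N^2)*(X^2+Y^2) = 2*e := by
  by_cases hXY : (2:ℤ) ∣ X+Y
  · by_cases hX : (2:ℤ) ∣ X
    · obtain ⟨x',hx'⟩ := hX
      obtain ⟨y',hy'⟩ : (2:ℤ) ∣ Y := by omega
      exact ⟨(M^2-N^2)*(2*(x'^2+y'^2)), by rw [hx',hy']; ring⟩
    · obtain ⟨w, _, hw⟩ := LU2 X Y (by omega) (by omega)
      exact ⟨(M^2-N^2)*w, by rw [hw]; ring⟩
  · obtain ⟨j, hj⟩ := L4dvd M N (by omega)
    exact ⟨2*j*(X^2+Y^2), by rw [hj]; ring⟩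

lemma Lodd (m n : ℤ) (h : (2:ℤ) ∣ m+n-1) : (2:ℤ) ∣ m^2-n^2-1 := by
  have z := zmod_of_dvd 2 _ h
  push_cast at z
  have := key2 m n (by linear_combination z)
  exact_mod_cast dvd_of_zmod 2 _ (by push_cast; linear_combination this)

lemma Loddprod (M N X Y : ℤ) (h1 : (2:ℤ) ∣ M+N-1) (h2 : (2:ℤ) ∣ X+Y-1) :
    (2:ℤ) ∣ (M^2-N^2)*(X^2+Y^2)-1 := by
  have z1 := zmod_of_dvd 2 _ h1
  have z2 := zmod_of_dvd 2 _ h2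
  push_cast at z1 z2
  have := key2b M N X Y (by linear_combination z1) (by linear_combination z2)
  exact_mod_cast dvd_of_zmod 2 _ (by push_cast; linear_combination this)

lemma Lpm3 (m n : ℤ) (hm : (2:ℤ) ∣ m-1) (hn : (2:ℤ) ∣ n-1)
    (h : (8:ℤ) ∣ 3 - m*n ∨ (8:ℤ) ∣ -3 - m*n) :
    ∃ s, Odd s ∧ m^2-n^2 = 8*s := by
  have zm := zmod_of_dvd 16 _ (show (16:ℤ) ∣ 8*(m-1) by omega)
  have zn := zmod_of_dvd 16 _ (show (16:ℤ) ∣ 8*(n-1) by omega)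
  push_cast at zm zn
  have hz : (6 - 2*((m:ZMod 16)*(n:ZMod 16)) = 0) ∨
      (-6 - 2*((m:ZMod 16)*(n:ZMod 16)) = 0) := by
    rcases h with ⟨k,hk⟩|⟨k,hk⟩
    · left
      have := zmod_of_dvd 16 (2*(3-m*n)) ⟨k, by push_cast; linarith⟩
      push_cast at this; linear_combination this
    · right
      have := zmod_of_dvd 16 (2*(-3-m*n)) ⟨k, by push_cast; linarith⟩
      push_cast at this; linear_combination this
  have := keypm3 m n (by linear_combination zm) (by linear_combination zn) hz
  obtain ⟨k, hk⟩ := dvd_of_zmod 16 (m^2-n^2-8) (by push_cast; linear_combination this)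
  refine ⟨2*k+1, odd_of ⟨k, by ring⟩, by push_cast at hk; linarith⟩

lemma Lpm1 (m n : ℤ) (hm : (2:ℤ) ∣ m-1) (hn : (2:ℤ) ∣ n-1)
    (h3 : ¬ (8:ℤ) ∣ 3 - m*n) (h3' : ¬ (8:ℤ) ∣ -3 - m*n) :
    ∃ k, m^2-n^2 = 16*k := by
  have zm := zmod_of_dvd 16 _ (show (16:ℤ) ∣ 8*(m-1) by omega)
  have zn := zmod_of_dvd 16 _ (show (16:ℤ) ∣ 8*(n-1) by omega)
  push_cast at zm zn
  have hz3 : ¬ (6 - 2*((m:ZMod 16)*(n:ZMod 16)) = 0) := by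
    intro hc
    apply h3
    obtain ⟨k, hk⟩ := dvd_of_zmod 16 (2*(3-m*n)) (by push_cast; linear_combination hc)
    exact ⟨k, by push_cast at hk; linarith⟩
  have hz3' : ¬ (-6 - 2*((m:ZMod 16)*(n:ZMod 16)) = 0) := by
    intro hc
    apply h3'
    obtain ⟨k, hk⟩ := dvd_of_zmod 16 (2*(-3-m*n)) (by push_cast; linear_combination hc)
    exact ⟨k, by push_cast at hk; linarith⟩
  have := keypm1 m n (by linear_combination zm) (by linear_combination zn) hz3 hz3'
  obtain ⟨k, hk⟩ := dvd_of_zmod 16 (m^2-n^2) (by push_cast; linear_combination this)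
  exact ⟨k, by push_cast at hk; linarith⟩

theorem stmt16 (a : ℕ → ℤ) :
    ((bI a 0 ≡ 0 [ZMOD 2] ∧ bI a 1 ≡ 0 [ZMOD 2] ∧ bI a 2 ≡ 0 [ZMOD 2] ∧ bI a 3 ≡ 0 [ZMOD 2]) →
      ((bI a 0 + bI a 1 + bI a 2 + bI a 3 ≡ 2 [ZMOD 4] ∧
          cI a 0 + cI a 1 + cI a 2 + cI a 3 ≡ 2 [ZMOD 4]) →
        ∃ t : ℤ, Odd t ∧
          D4 (bI a 0) (bI a 1) (bI a 2) (bI a 3) * D4 (cI a 0) (cI a 1) (cI a 2) (cI a 3) =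
            2 ^ 8 * t) ∧
      (¬ (bI a 0 + bI a 1 + bI a 2 + bI a 3 ≡ 2 [ZMOD 4] ∧
            cI a 0 + cI a 1 + cI a 2 + cI a 3 ≡ 2 [ZMOD 4]) →
        (2 ^ 12 : ℤ) ∣
          D4 (bI a 0) (bI a 1) (bI a 2) (bI a 3) * D4 (cI a 0) (cI a 1) (cI a 2) (cI a 3))) ∧
    ((bI a 0 ≡ 1 [ZMOD 2] ∧ bI a 1 ≡ 1 [ZMOD 2] ∧ bI a 2 ≡ 1 [ZMOD 2] ∧ bI a 3 ≡ 1 [ZMOD 2]) →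
      ((bI a 0 + bI a 1 + bI a 2 + bI a 3 ≡ 2 [ZMOD 4] ∧
          cI a 0 + cI a 1 + cI a 2 + cI a 3 ≡ 2 [ZMOD 4]) →
        ∃ t : ℤ, Odd t ∧
          D4 (bI a 0) (bI a 1) (bI a 2) (bI a 3) * D4 (cI a 0) (cI a 1) (cI a 2) (cI a 3) =
            2 ^ 8 * t) ∧
      (¬ (bI a 0 + bI a 1 + bI a 2 + bI a 3 ≡ 2 [ZMOD 4] ∧
            cI a 0 + cI a 1 + cI a 2 + cI a 3 ≡ 2 [ZMOD 4]) →
        (2 ^ 11 : ℤ) ∣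
          D4 (bI a 0) (bI a 1) (bI a 2) (bI a 3) * D4 (cI a 0) (cI a 1) (cI a 2) (cI a 3))) ∧
    ((bI a 0 ≡ bI a 2 [ZMOD 2] ∧ bI a 1 ≡ bI a 3 [ZMOD 2] ∧ ¬ (bI a 0 ≡ bI a 1 [ZMOD 2])) →
      ((bI a 0 - bI a 2 ≡ 2 [ZMOD 4] ∧ bI a 1 - bI a 3 ≡ 2 [ZMOD 4] ∧
          cI a 0 - cI a 2 ≡ 2 [ZMOD 4] ∧ cI a 1 - cI a 3 ≡ 2 [ZMOD 4]) →
        ∃ t : ℤ, Odd t ∧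
          D4 (bI a 0) (bI a 1) (bI a 2) (bI a 3) * D4 (cI a 0) (cI a 1) (cI a 2) (cI a 3) =
            2 ^ 10 * t) ∧
      (¬ (bI a 0 - bI a 2 ≡ 2 [ZMOD 4] ∧ bI a 1 - bI a 3 ≡ 2 [ZMOD 4] ∧
            cI a 0 - cI a 2 ≡ 2 [ZMOD 4] ∧ cI a 1 - cI a 3 ≡ 2 [ZMOD 4]) →
        (2 ^ 11 : ℤ) ∣
          D4 (bI a 0) (bI a 1) (bI a 2) (bI a 3) * D4 (cI a 0) (cI a 1) (cI a 2) (cI a 3))) ∧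
    ((bI a 0 + bI a 2 ≡ 1 [ZMOD 2] ∧ bI a 1 + bI a 3 ≡ 1 [ZMOD 2]) →
      ((((bI a 0 + bI a 2) * (bI a 1 + bI a 3) ≡ 3 [ZMOD 8] ∨
            (bI a 0 + bI a 2) * (bI a 1 + bI a 3) ≡ -3 [ZMOD 8]) ∧
          ((cI a 0 + cI a 2) * (cI a 1 + cI a 3) ≡ 3 [ZMOD 8] ∨
            (cI a 0 + cI a 2) * (cI a 1 + cI a 3) ≡ -3 [ZMOD 8])) →
        ∃ t : ℤ, Odd t ∧
          D4 (bI a 0) (bI a 1) (bI a 2) (bI a 3) * D4 (cI a 0) (cI a 1) (cI a 2) (cI a 3) =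
            2 ^ 8 * t) ∧
      (¬ (((bI a 0 + bI a 2) * (bI a 1 + bI a 3) ≡ 3 [ZMOD 8] ∨
              (bI a 0 + bI a 2) * (bI a 1 + bI a 3) ≡ -3 [ZMOD 8]) ∧
            ((cI a 0 + cI a 2) * (cI a 1 + cI a 3) ≡ 3 [ZMOD 8] ∨
              (cI a 0 + cI a 2) * (cI a 1 + cI a 3) ≡ -3 [ZMOD 8])) →
        (2 ^ 9 : ℤ) ∣
          D4 (bI a 0) (bI a 1) (bI a 2) (bI a 3) * D4 (cI a 0) (cI a 1) (cI a 2) (cI a 3))) := by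
  have hK0 : bI a 0 - cI a 0 = 2*(a 4 + a 12) := by simp only [bI, cI]; norm_num; ring
  have hK1 : bI a 1 - cI a 1 = 2*(a 5 + a 13) := by simp only [bI, cI]; norm_num; ring
  have hK2 : bI a 2 - cI a 2 = 2*(a 6 + a 14) := by simp only [bI, cI]; norm_num; ring
  have hK3 : bI a 3 - cI a 3 = 2*(a 7 + a 15) := by simp only [bI, cI]; norm_num; ring
  refine ⟨?_, ?_, ?_, ?_⟩
  -- Case 1 : all b_i even
  · rintro ⟨h0, h1, h2, h3⟩
    have e0 : (2:ℤ) ∣ bI a 0 := by have := h0.dvd; omega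
    have e1 : (2:ℤ) ∣ bI a 1 := by have := h1.dvd; omega
    have e2 : (2:ℤ) ∣ bI a 2 := by have := h2.dvd; omega
    have e3 : (2:ℤ) ∣ bI a 3 := by have := h3.dvd; omega
    obtain ⟨β0, hβ0⟩ := e0
    obtain ⟨β1, hβ1⟩ := e1
    obtain ⟨β2, hβ2⟩ := e2
    obtain ⟨β3, hβ3⟩ := e3
    obtain ⟨γ0, hγ0⟩ : (2:ℤ) ∣ cI a 0 := by omega
    obtain ⟨γ1, hγ1⟩ : (2:ℤ) ∣ cI a 1 := by omega
    obtain ⟨γ2, hγ2⟩ : (2:ℤ) ∣ cI a 2 := by omega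
    obtain ⟨γ3, hγ3⟩ : (2:ℤ) ∣ cI a 3 := by omega
    have hb4 : D4 (bI a 0) (bI a 1) (bI a 2) (bI a 3)
        = 2^4 * (((β0+β2)^2-(β1+β3)^2)*((β0-β2)^2+(β1-β3)^2)) := by
      rw [D4_eq2, hβ0, hβ1, hβ2, hβ3]; ring
    have hc4 : D4 (cI a 0) (cI a 1) (cI a 2) (cI a 3)
        = 2^4 * (((γ0+γ2)^2-(γ1+γ3)^2)*((γ0-γ2)^2+(γ1-γ3)^2)) := by
      rw [D4_eq2, hγ0, hγ1, hγ2, hγ3]; ring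
    constructor
    · rintro ⟨hb, hc⟩
      have hbd := hb.dvd
      have hcd := hc.dvd
      have hMN : (2:ℤ) ∣ (β0+β2)+(β1+β3)-1 := by omega
      have hXY : (2:ℤ) ∣ (β0-β2)+(β1-β3)-1 := by omega
      have hMNc : (2:ℤ) ∣ (γ0+γ2)+(γ1+γ3)-1 := by omega
      have hXYc : (2:ℤ) ∣ (γ0-γ2)+(γ1-γ3)-1 := by omega
      refine ⟨_, (odd_of (Loddprod _ _ _ _ hMN hXY)).mul
        (odd_of (Loddprod _ _ _ _ hMNc hXYc)), ?_⟩
      rw [hb4, hc4]; ring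
    · intro hne
      rcases not_and_or.mp hne with h | h
      · rw [Int.modEq_iff_dvd] at h
        obtain ⟨e, he⟩ := L16 (β0+β2) (β1+β3) (β0-β2) (β1-β3) (by omega)
          ⟨β2, by ring⟩ ⟨β3, by ring⟩
        exact ⟨e * (((γ0+γ2)^2-(γ1+γ3)^2)*((γ0-γ2)^2+(γ1-γ3)^2)),
          by rw [hb4, hc4, he]; ring⟩
      · rw [Int.modEq_iff_dvd] at h
        obtain ⟨e, he⟩ := L16 (γ0+γ2) (γ1+γ3) (γ0-γ2) (γ1-γ3) (by omega)
          ⟨γ2, by ring⟩ ⟨γ3, by ring⟩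
        exact ⟨(((β0+β2)^2-(β1+β3)^2)*((β0-β2)^2+(β1-β3)^2)) * e,
          by rw [hb4, hc4, he]; ring⟩
  -- Case 2 : all b_i odd
  · rintro ⟨h0, h1, h2, h3⟩
    have e0 : (2:ℤ) ∣ bI a 0 - 1 := by have := h0.dvd; omega
    have e1 : (2:ℤ) ∣ bI a 1 - 1 := by have := h1.dvd; omega
    have e2 : (2:ℤ) ∣ bI a 2 - 1 := by have := h2.dvd; omega
    have e3 : (2:ℤ) ∣ bI a 3 - 1 := by have := h3.dvd; omega
    obtain ⟨Mb, hMb⟩ : (2:ℤ) ∣ bI a 0 + bI a 2 := by omega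
    obtain ⟨Nb, hNb⟩ : (2:ℤ) ∣ bI a 1 + bI a 3 := by omega
    obtain ⟨Xb, hXb⟩ : (2:ℤ) ∣ bI a 0 - bI a 2 := by omega
    obtain ⟨Yb, hYb⟩ : (2:ℤ) ∣ bI a 1 - bI a 3 := by omega
    obtain ⟨Mc, hMc⟩ : (2:ℤ) ∣ cI a 0 + cI a 2 := by omega
    obtain ⟨Nc, hNc⟩ : (2:ℤ) ∣ cI a 1 + cI a 3 := by omega
    obtain ⟨Xc, hXc⟩ : (2:ℤ) ∣ cI a 0 - cI a 2 := by omega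
    obtain ⟨Yc, hYc⟩ : (2:ℤ) ∣ cI a 1 - cI a 3 := by omega
    have hb4 : D4 (bI a 0) (bI a 1) (bI a 2) (bI a 3)
        = 2^4 * ((Mb^2-Nb^2)*(Xb^2+Yb^2)) := by
      rw [D4_eq2, hMb, hNb, hXb, hYb]; ring
    have hc4 : D4 (cI a 0) (cI a 1) (cI a 2) (cI a 3)
        = 2^4 * ((Mc^2-Nc^2)*(Xc^2+Yc^2)) := by
      rw [D4_eq2, hMc, hNc, hXc, hYc]; ring
    constructor
    · rintro ⟨hb, hc⟩
      have hbd := hb.dvd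
      have hcd := hc.dvd
      have hMN : (2:ℤ) ∣ Mb+Nb-1 := by omega
      have hXY : (2:ℤ) ∣ Xb+Yb-1 := by omega
      have hMNc : (2:ℤ) ∣ Mc+Nc-1 := by omega
      have hXYc : (2:ℤ) ∣ Xc+Yc-1 := by omega
      refine ⟨_, (odd_of (Loddprod _ _ _ _ hMN hXY)).mul
        (odd_of (Loddprod _ _ _ _ hMNc hXYc)), ?_⟩
      rw [hb4, hc4]; ring
    · intro hne
      rcases not_and_or.mp hne with h | h
      · rw [Int.modEq_iff_dvd] at h
        obtain ⟨e, he⟩ := L8 Mb Nb Xb Yb (by omega) (by omega) (by omega)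
        exact ⟨e * ((Mc^2-Nc^2)*(Xc^2+Yc^2)), by rw [hb4, hc4, he]; ring⟩
      · rw [Int.modEq_iff_dvd] at h
        obtain ⟨e, he⟩ := L8 Mc Nc Xc Yc (by omega) (by omega) (by omega)
        exact ⟨((Mb^2-Nb^2)*(Xb^2+Yb^2)) * e, by rw [hb4, hc4, he]; ring⟩
  -- Case 3
  · rintro ⟨h02, h13, hne01⟩
    have d02 := h02.dvd
    have d13 := h13.dvd
    rw [Int.modEq_iff_dvd] at hne01
    obtain ⟨Mb, hMb⟩ : (2:ℤ) ∣ bI a 0 + bI a 2 := by omega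
    obtain ⟨Nb, hNb⟩ : (2:ℤ) ∣ bI a 1 + bI a 3 := by omega
    obtain ⟨Xb, hXb⟩ : (2:ℤ) ∣ bI a 0 - bI a 2 := by omega
    obtain ⟨Yb, hYb⟩ : (2:ℤ) ∣ bI a 1 - bI a 3 := by omega
    obtain ⟨Mc, hMc⟩ : (2:ℤ) ∣ cI a 0 + cI a 2 := by omega
    obtain ⟨Nc, hNc⟩ : (2:ℤ) ∣ cI a 1 + cI a 3 := by omega
    obtain ⟨Xc, hXc⟩ : (2:ℤ) ∣ cI a 0 - cI a 2 := by omega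
    obtain ⟨Yc, hYc⟩ : (2:ℤ) ∣ cI a 1 - cI a 3 := by omega
    have hb4 : D4 (bI a 0) (bI a 1) (bI a 2) (bI a 3)
        = 2^4 * ((Mb^2-Nb^2)*(Xb^2+Yb^2)) := by
      rw [D4_eq2, hMb, hNb, hXb, hYb]; ring
    have hc4 : D4 (cI a 0) (cI a 1) (cI a 2) (cI a 3)
        = 2^4 * ((Mc^2-Nc^2)*(Xc^2+Yc^2)) := by
      rw [D4_eq2, hMc, hNc, hXc, hYc]; ring
    constructor
    · rintro ⟨hA, hB, hC, hD⟩
      have dA := hA.dvd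
      have dB := hB.dvd
      have dC := hC.dvd
      have dD := hD.dvd
      have hXodd : (2:ℤ) ∣ Xb - 1 := by omega
      have hYodd : (2:ℤ) ∣ Yb - 1 := by omega
      have hXcodd : (2:ℤ) ∣ Xc - 1 := by omega
      have hYcodd : (2:ℤ) ∣ Yc - 1 := by omega
      have hMN : (2:ℤ) ∣ Mb+Nb-1 := by omega
      have hMNc : (2:ℤ) ∣ Mc+Nc-1 := by omega
      obtain ⟨wb, hwbodd, hwb⟩ := LU2 Xb Yb hXodd hYodd
      obtain ⟨wc, hwcodd, hwc⟩ := LU2 Xc Yc hXcodd hYcodd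
      refine ⟨_, ((odd_of (Lodd _ _ hMN)).mul hwbodd).mul
        ((odd_of (Lodd _ _ hMNc)).mul hwcodd), ?_⟩
      rw [hb4, hc4, hwb, hwc]; ring
    · intro hne
      have hparb : (2:ℤ) ∣ Mb+Nb+Xb+Yb-1 := by omega
      have hparc : (2:ℤ) ∣ Mc+Nc+Xc+Yc-1 := by omega
      have hsplit : (¬(bI a 0 - bI a 2 ≡ 2 [ZMOD 4]) ∨ ¬(bI a 1 - bI a 3 ≡ 2 [ZMOD 4])) ∨
          (¬(cI a 0 - cI a 2 ≡ 2 [ZMOD 4]) ∨ ¬(cI a 1 - cI a 3 ≡ 2 [ZMOD 4])) := by tauto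
      rcases hsplit with h | h
      · have hXYor : (2:ℤ) ∣ Xb ∨ (2:ℤ) ∣ Yb := by
          rcases h with h | h
          · rw [Int.modEq_iff_dvd] at h; exact Or.inl (by omega)
          · rw [Int.modEq_iff_dvd] at h; exact Or.inr (by omega)
        obtain ⟨e, he⟩ := L4 Mb Nb Xb Yb hparb hXYor
        obtain ⟨f, hf⟩ := L2 Mc Nc Xc Yc hparc
        exact ⟨e*f, by rw [hb4, hc4, he, hf]; ring⟩
      · have hXYor : (2:ℤ) ∣ Xc ∨ (2:ℤ) ∣ Yc := by
          rcases h with h | h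
          · rw [Int.modEq_iff_dvd] at h; exact Or.inl (by omega)
          · rw [Int.modEq_iff_dvd] at h; exact Or.inr (by omega)
        obtain ⟨e, he⟩ := L4 Mc Nc Xc Yc hparc hXYor
        obtain ⟨f, hf⟩ := L2 Mb Nb Xb Yb hparb
        exact ⟨f*e, by rw [hb4, hc4, he, hf]; ring⟩
  -- Case 4
  · rintro ⟨h02, h13⟩
    have e02 : (2:ℤ) ∣ (bI a 0 + bI a 2) - 1 := by have := h02.dvd; omega
    have e13 : (2:ℤ) ∣ (bI a 1 + bI a 3) - 1 := by have := h13.dvd; omega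
    have f02 : (2:ℤ) ∣ (cI a 0 + cI a 2) - 1 := by omega
    have f13 : (2:ℤ) ∣ (cI a 1 + cI a 3) - 1 := by omega
    have ex : (2:ℤ) ∣ (bI a 0 - bI a 2) - 1 := by omega
    have ey : (2:ℤ) ∣ (bI a 1 - bI a 3) - 1 := by omega
    have fx : (2:ℤ) ∣ (cI a 0 - cI a 2) - 1 := by omega
    have fy : (2:ℤ) ∣ (cI a 1 - cI a 3) - 1 := by omega
    obtain ⟨wb, hwbodd, hwb⟩ := LU2 _ _ ex ey
    obtain ⟨wc, hwcodd, hwc⟩ := LU2 _ _ fx fy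
    constructor
    · rintro ⟨hb, hc⟩
      have hbdvd : (8:ℤ) ∣ 3 - (bI a 0 + bI a 2)*(bI a 1 + bI a 3) ∨
          (8:ℤ) ∣ -3 - (bI a 0 + bI a 2)*(bI a 1 + bI a 3) := by
        rcases hb with h | h
        · exact Or.inl h.dvd
        · exact Or.inr h.dvd
      have hcdvd : (8:ℤ) ∣ 3 - (cI a 0 + cI a 2)*(cI a 1 + cI a 3) ∨
          (8:ℤ) ∣ -3 - (cI a 0 + cI a 2)*(cI a 1 + cI a 3) := by
        rcases hc with h | h
        · exact Or.inl h.dvd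
        · exact Or.inr h.dvd
      obtain ⟨sb, hsbodd, hsb⟩ := Lpm3 _ _ e02 e13 hbdvd
      obtain ⟨sc, hscodd, hsc⟩ := Lpm3 _ _ f02 f13 hcdvd
      refine ⟨_, (hsbodd.mul hwbodd).mul (hscodd.mul hwcodd), ?_⟩
      rw [D4_eq2, D4_eq2, hsb, hsc, hwb, hwc]; ring
    · intro hne
      rcases not_and_or.mp hne with h | h
      · push_neg at h
        obtain ⟨hp, hq⟩ := h
        rw [Int.modEq_iff_dvd] at hp hq
        obtain ⟨k, hk⟩ := Lpm1 _ _ e02 e13 hp hq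
        obtain ⟨j, hj⟩ := L8odd (cI a 0 + cI a 2) (cI a 1 + cI a 3) f02 f13
        exact ⟨k*wb*(j*wc), by rw [D4_eq2, D4_eq2, hk, hj, hwb, hwc]; ring⟩
      · push_neg at h
        obtain ⟨hp, hq⟩ := h
        rw [Int.modEq_iff_dvd] at hp hq
        obtain ⟨k, hk⟩ := Lpm1 _ _ f02 f13 hp hq
        obtain ⟨j, hj⟩ := L8odd (bI a 0 + bI a 2) (bI a 1 + bI a 3) e02 e13
        exact ⟨j*wb*(k*wc), by rw [D4_eq2, D4_eq2, hk, hj, hwb, hwc]; ring⟩
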